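/- The number of order-preserving regressive functions from {0,1,…,n−1} to itself equals the n-th Catalan number (1/(n+1))·C(2n, n). -/

import Mathlib

open Nat

private def A (n : ℕ) : Type := {f : Fin n → Fin n // Monotone f ∧ ∀ i, f i ≤ i}

private instance (n : ℕ) : Finite (A n) := by unfold A; infer_instance

/-- greatest fixed point of `f` -/
private def J {n : ℕ} (f : Fin (n+1) → Fin (n+1)) : ℕ :=
  Nat.findGreatest (fun k => (f ⟨min k n, Nat.lt_succ_of_le (min_le_right k n)⟩ : ℕ) = k) n

section
variable {n : ℕ} (f : Fin (n+1) → Fin (n+1))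

private lemma J_le : J f ≤ n := Nat.findGreatest_le n

private lemma J_fix (hr : ∀ i, f i ≤ i) :
    (f ⟨J f, Nat.lt_succ_of_le (J_le f)⟩ : ℕ) = J f := by
  have h0 : (f ⟨min 0 n, Nat.lt_succ_of_le (min_le_right 0 n)⟩ : ℕ) = 0 := by
    have := hr ⟨min 0 n, Nat.lt_succ_of_le (min_le_right 0 n)⟩
    simp only [Fin.le_def] at this
    omega
  have hs : (f ⟨min (J f) n, Nat.lt_succ_of_le (min_le_right _ n)⟩ : ℕ) = J f :=
    Nat.findGreatest_spec (P := fun k =>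
      (f ⟨min k n, Nat.lt_succ_of_le (min_le_right k n)⟩ : ℕ) = k) (Nat.zero_le n) h0
  have harg : (⟨min (J f) n, Nat.lt_succ_of_le (min_le_right _ n)⟩ : Fin (n+1))
      = ⟨J f, Nat.lt_succ_of_le (J_le f)⟩ := Fin.mk_eq_mk.mpr (by have := J_le f; omega)
  rwa [harg] at hs

private lemma J_max {k : ℕ} (h1 : J f < k) (h2 : k ≤ n) (hk : k < n + 1) :
    (f ⟨k, hk⟩ : ℕ) ≠ k := by
  have hs : ¬ (f ⟨min k n, Nat.lt_succ_of_le (min_le_right k n)⟩ : ℕ) = k :=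
    Nat.findGreatest_is_greatest (P := fun k =>
      (f ⟨min k n, Nat.lt_succ_of_le (min_le_right k n)⟩ : ℕ) = k) h1 h2
  have harg : (⟨min k n, Nat.lt_succ_of_le (min_le_right k n)⟩ : Fin (n+1))
      = ⟨k, hk⟩ := Fin.mk_eq_mk.mpr (by omega)
  rwa [harg] at hs

variable (hm : Monotone f) (hr : ∀ i, f i ≤ i)

/-- the part of `f` before `J f` -/
private def toG : A (J f) :=
  ⟨fun i => ⟨(f ⟨i, by have := J_le f; have := i.2; omega⟩ : ℕ), by
      have h := Fin.le_def.mp (hr ⟨i, by have := J_le f; have := i.2; omega⟩)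
      have := i.2; simp at h ⊢; omega⟩,
    by
      refine ⟨fun a b hab => ?_, fun i => ?_⟩
      · simp only [Fin.le_def]
        exact Fin.le_def.mp (hm (Fin.mk_le_mk.mpr (Fin.le_def.mp hab)))
      · have h := Fin.le_def.mp (hr ⟨i, by have := J_le f; have := i.2; omega⟩)
        simp only [Fin.le_def] at h ⊢
        simp at h ⊢; omega⟩

/-- the part of `f` after `J f` -/
private def toH : A (n - J f) :=
  ⟨fun i => ⟨(f ⟨J f + 1 + i, by have := J_le f; have := i.2; omega⟩ : ℕ) - J f, by
      have h2 := i.2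
      have hle := J_le f
      have hne := J_max f (k := J f + 1 + i) (by omega) (by omega) (by omega)
      have h := Fin.le_def.mp (hr ⟨J f + 1 + i, by omega⟩)
      simp at h ⊢; omega⟩,
    by
      refine ⟨fun a b hab => ?_, fun i => ?_⟩
      · simp only [Fin.le_def]
        have h2a := a.2; have h2b := b.2
        have hle := J_le f
        have : f ⟨J f + 1 + a, by omega⟩ ≤ f ⟨J f + 1 + b, by omega⟩ :=
          hm (Fin.mk_le_mk.mpr (by have := Fin.le_def.mp hab; omega))
        have := Fin.le_def.mp this
        simp at this ⊢; omega
      · have h2 := i.2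
        have hle := J_le f
        have hne := J_max f (k := J f + 1 + i) (by omega) (by omega) (by omega)
        have h := Fin.le_def.mp (hr ⟨J f + 1 + i, by omega⟩)
        simp only [Fin.le_def] at h ⊢
        simp at h ⊢; omega⟩

end

section
variable {n : ℕ} (j : ℕ) (hj : j < n + 1) (g : Fin j → Fin j) (h : Fin (n - j) → Fin (n - j))

/-- glue `g` and `h` with greatest fixed point at `j` -/
private def glue : Fin (n+1) → Fin (n+1) := fun i =>
  if h1 : (i : ℕ) < j then ⟨(g ⟨i, h1⟩ : ℕ), by have := (g ⟨i, h1⟩).2; omega⟩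
  else if h2 : (i : ℕ) ≤ j then ⟨j, hj⟩
  else ⟨j + (h ⟨i - (j + 1), by have := i.2; omega⟩ : ℕ), by
    have := (h ⟨i - (j+1), by have := i.2; omega⟩).2
    omega⟩

private lemma glue_lt {i : Fin (n+1)} (h1 : (i : ℕ) < j) :
    (glue j hj g h i : ℕ) = g ⟨i, h1⟩ := by
  unfold glue; rw [dif_pos h1]

private lemma glue_eq {i : Fin (n+1)} (h1 : (i : ℕ) = j) :
    (glue j hj g h i : ℕ) = j := by
  unfold glue; rw [dif_neg (by omega), dif_pos (by omega)]

private lemma glue_gt {i : Fin (n+1)} (h1 : j < (i : ℕ)) :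
    (glue j hj g h i : ℕ) = j + h ⟨(i : ℕ) - (j + 1), by have := i.2; omega⟩ := by
  unfold glue; rw [dif_neg (by omega), dif_neg (by omega)]

private lemma glue_reg (hgr : ∀ i, g i ≤ i) (hhr : ∀ i, h i ≤ i) :
    ∀ i, glue j hj g h i ≤ i := by
  intro i
  rw [Fin.le_def]
  rcases lt_trichotomy (i : ℕ) j with h1 | h1 | h1
  · rw [glue_lt j hj g h h1]
    have := Fin.le_def.mp (hgr ⟨i, h1⟩); simp at this; omega
  · rw [glue_eq j hj g h h1]; omega
  · rw [glue_gt j hj g h h1]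
    have := Fin.le_def.mp (hhr ⟨(i : ℕ) - (j+1), by have := i.2; omega⟩)
    simp at this; omega

private lemma glue_mono (hgm : Monotone g) (hgr : ∀ i, g i ≤ i) (hhm : Monotone h) :
    Monotone (glue j hj g h) := by
  intro a b hab
  have hab' : (a : ℕ) ≤ b := hab
  rw [Fin.le_def]
  rcases lt_trichotomy (a : ℕ) j with h1 | h1 | h1
  · rw [glue_lt j hj g h h1]
    rcases lt_trichotomy (b : ℕ) j with h2 | h2 | h2
    · rw [glue_lt j hj g h h2]
      exact Fin.le_def.mp (hgm (Fin.mk_le_mk.mpr hab'))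
    · rw [glue_eq j hj g h h2]
      have := (g ⟨a, h1⟩).2; omega
    · rw [glue_gt j hj g h h2]
      have := (g ⟨a, h1⟩).2; omega
  · have h2 : j ≤ (b : ℕ) := by omega
    rw [glue_eq j hj g h h1]
    rcases eq_or_lt_of_le h2 with h3 | h3
    · rw [glue_eq j hj g h h3.symm]
    · rw [glue_gt j hj g h h3]; omega
  · have h2 : j < (b : ℕ) := by omega
    rw [glue_gt j hj g h h1, glue_gt j hj g h h2]
    have : h ⟨(a : ℕ) - (j+1), by have := a.2; omega⟩ ≤
        h ⟨(b : ℕ) - (j+1), by have := b.2; omega⟩ := hhm (Fin.mk_le_mk.mpr (by omega))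
    have := Fin.le_def.mp this
    simp at this; omega

end

private def Dto {n : ℕ} (x : A (n+1)) : Σ j : Fin (n+1), A j × A (n - (j : ℕ)) :=
  ⟨⟨J x.1, Nat.lt_succ_of_le (J_le x.1)⟩, toG x.1 x.2.1 x.2.2, toH x.1 x.2.1 x.2.2⟩

private def Dinv {n : ℕ} (y : Σ j : Fin (n+1), A j × A (n - (j : ℕ))) : A (n+1) :=
  ⟨glue y.1 y.1.2 y.2.1.1 y.2.2.1,
   glue_mono _ _ _ _ y.2.1.2.1 y.2.1.2.2 y.2.2.2.1,
   glue_reg _ _ _ _ y.2.1.2.2 y.2.2.2.2⟩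

private lemma D_left {n : ℕ} : Function.LeftInverse (Dinv (n := n)) Dto := by
  rintro ⟨f, hm, hr⟩
  apply Subtype.ext
  funext i
  apply Fin.ext
  show (glue (J f) (Nat.lt_succ_of_le (J_le f)) (toG f hm hr).1 (toH f hm hr).1 i : ℕ) = f i
  rcases lt_trichotomy (i : ℕ) (J f) with h1 | h1 | h1
  · rw [glue_lt _ _ _ _ h1]
    show (f ⟨(i : ℕ), _⟩ : ℕ) = f i
    congr 1
  · rw [glue_eq _ _ _ _ h1]
    have hfix := J_fix f hr
    have harg : (⟨J f, Nat.lt_succ_of_le (J_le f)⟩ : Fin (n+1)) = i :=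
      Fin.ext (by simpa using h1.symm)
    rw [harg] at hfix
    omega
  · rw [glue_gt _ _ _ _ h1]
    show J f + ((f ⟨J f + 1 + ((i : ℕ) - (J f + 1)), _⟩ : ℕ) - J f) = f i
    have hJle := J_le f
    have hfix := J_fix f hr
    have hge : J f ≤ (f i : ℕ) := by
      have : f ⟨J f, Nat.lt_succ_of_le hJle⟩ ≤ f i :=
        hm (by simp only [Fin.le_def]; simpa using h1.le)
      have := Fin.le_def.mp this
      omega
    rw [show (⟨J f + 1 + ((i : ℕ) - (J f + 1)),
      (by have := i.2; omega : J f + 1 + ((i : ℕ) - (J f + 1)) < n + 1)⟩ : Fin (n+1)) = i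
      from Fin.ext (by show J f + 1 + ((i : ℕ) - (J f + 1)) = (i : ℕ); omega)]
    omega

private lemma D_inj {n : ℕ} : Function.Injective (Dinv (n := n)) := by
  rintro ⟨⟨j1, hj1⟩, ⟨g1, hg1m, hg1r⟩, ⟨h1, hh1m, hh1r⟩⟩
    ⟨⟨j2, hj2⟩, ⟨g2, hg2m, hg2r⟩, ⟨h2, hh2m, hh2r⟩⟩ heq
  have hfe : glue j1 hj1 g1 h1 = glue j2 hj2 g2 h2 := congrArg Subtype.val heq
  have hj : j1 = j2 := by
    by_contra hne
    rcases Nat.lt_or_ge j1 j2 with hlt | hge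
    · have e1 : (glue j1 hj1 g1 h1 ⟨j2, hj2⟩ : ℕ) = j1 + h1 ⟨j2 - (j1+1), by simp; omega⟩ :=
        glue_gt _ _ _ _ (by simpa using hlt)
      have e2 : (glue j2 hj2 g2 h2 ⟨j2, hj2⟩ : ℕ) = j2 := glue_eq _ _ _ _ (by simp)
      rw [hfe, e2] at e1
      have := Fin.le_def.mp (hh1r ⟨j2 - (j1+1), by simp; omega⟩)
      simp at this; omega
    · have hlt : j2 < j1 := by omega
      have e1 : (glue j2 hj2 g2 h2 ⟨j1, hj1⟩ : ℕ) = j2 + h2 ⟨j1 - (j2+1), by simp; omega⟩ :=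
        glue_gt _ _ _ _ (by simpa using hlt)
      have e2 : (glue j1 hj1 g1 h1 ⟨j1, hj1⟩ : ℕ) = j1 := glue_eq _ _ _ _ (by simp)
      rw [← hfe, e2] at e1
      have := Fin.le_def.mp (hh2r ⟨j1 - (j2+1), by simp; omega⟩)
      simp at this; omega
  subst hj
  have hg : g1 = g2 := by
    funext i
    apply Fin.ext
    have hi : (i : ℕ) < j1 := i.2
    have e1 : (glue j1 hj1 g1 h1 ⟨(i : ℕ), by omega⟩ : ℕ) = g1 ⟨(i : ℕ), by simpa using hi⟩ :=
      glue_lt _ _ _ _ (by simpa using hi)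
    have e2 : (glue j1 hj2 g2 h2 ⟨(i : ℕ), by omega⟩ : ℕ) = g2 ⟨(i : ℕ), by simpa using hi⟩ :=
      glue_lt _ _ _ _ (by simpa using hi)
    rw [hfe, e2] at e1
    rw [show (⟨(i : ℕ), by simpa using hi⟩ : Fin j1) = i from Fin.ext rfl] at e1 e2
    omega
  subst hg
  have hh : h1 = h2 := by
    funext i
    apply Fin.ext
    have hi : (i : ℕ) < n - j1 := i.2
    have e1 : (glue j1 hj1 g1 h1 ⟨j1 + 1 + (i : ℕ), by omega⟩ : ℕ)
        = j1 + h1 ⟨j1 + 1 + (i : ℕ) - (j1 + 1), by omega⟩ :=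
      glue_gt _ _ _ _ (by simp; omega)
    have e2 : (glue j1 hj2 g1 h2 ⟨j1 + 1 + (i : ℕ), by omega⟩ : ℕ)
        = j1 + h2 ⟨j1 + 1 + (i : ℕ) - (j1 + 1), by omega⟩ :=
      glue_gt _ _ _ _ (by simp; omega)
    rw [hfe, e2] at e1
    simp only [Nat.add_sub_cancel_left, Fin.eta] at e1
    omega
  subst hh
  rfl

private def decompEquiv (n : ℕ) : A (n+1) ≃ Σ j : Fin (n+1), A j × A (n - (j : ℕ)) where
  toFun := Dto
  invFun := Dinv
  left_inv := D_left
  right_inv := D_left.rightInverse_of_injective D_inj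

private theorem cardA (n : ℕ) : Nat.card (A n) = catalan n := by
  induction n using Nat.strong_induction_on with
  | _ n ih =>
    match n with
    | 0 =>
      rw [catalan_zero]
      have hs : Subsingleton (A 0) := by
        constructor; rintro ⟨f, _⟩ ⟨g, _⟩
        apply Subtype.ext; funext i; exact absurd i.2 (by omega)
      have hne : Nonempty (A 0) := ⟨⟨fun i => i, monotone_id, fun i => le_refl _⟩⟩
      rw [Nat.card_eq_one_iff_unique]
      exact ⟨hs, hne⟩
    | (m + 1) =>
      letI : ∀ k, Fintype (A k) := fun k => Fintype.ofFinite _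
      rw [Nat.card_congr (decompEquiv m), Nat.card_eq_fintype_card, Fintype.card_sigma,
        catalan_succ]
      refine Finset.sum_congr rfl fun j _ => ?_
      rw [Fintype.card_prod, ← Nat.card_eq_fintype_card, ← Nat.card_eq_fintype_card,
        ih j (by omega), ih (m - j) (by omega)]

theorem stmt_19 (n : ℕ) :
    Nat.card {f : Fin n → Fin n // Monotone f ∧ ∀ i, f i ≤ i} =
      (2 * n).choose n / (n + 1) := by
  have := cardA n
  unfold A at this
  rw [this, catalan_eq_centralBinom_div, Nat.centralBinom]
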